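/- Let (a,b,c) be a primitive triple of positive integers with a² + b² = 2c². Then there exist coprime integers α, β of different parities such that a = |α² - 2αβ - β²|, b = |α² + 2αβ - β²|, and c = α² + β². -/
import Mathlib


/-- Every primitive triple (a,b,c) of positive integers with
a² + b² = 2c² arises from coprime integers α, β of different parities via
a = |α² - 2αβ - β²|, b = |α² + 2αβ - β²|, c = α² + β². -/
theorem stmt0 (a b c : ℕ) (ha : 0 < a) (hb : 0 < b) (hc : 0 < c)
    (hprim : Nat.gcd a (Nat.gcd b c) = 1) (h : a ^ 2 + b ^ 2 = 2 * c ^ 2) :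
    ∃ α β : ℤ, IsCoprime α β ∧ α % 2 ≠ β % 2 ∧
      (a : ℤ) = |α ^ 2 - 2 * α * β - β ^ 2| ∧
      (b : ℤ) = |α ^ 2 + 2 * α * β - β ^ 2| ∧
      (c : ℤ) = α ^ 2 + β ^ 2 := by
  -- a and b are both odd
  have heven : Even a ↔ Even b := by
    have h2 : Even (a ^ 2 + b ^ 2) := ⟨c ^ 2, by linarith⟩
    rw [Nat.even_add] at h2
    simpa [Nat.even_pow] using h2
  have hodd : a % 2 = 1 ∧ b % 2 = 1 := by
    rcases Nat.even_or_odd a with ⟨x, hx⟩ | ⟨x, hx⟩ <;>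
      rcases Nat.even_or_odd b with ⟨y, hy⟩ | ⟨y, hy⟩
    · exfalso
      have h2c : 2 ∣ c := by
        refine Nat.Prime.dvd_of_dvd_pow Nat.prime_two (n := 2) ⟨x ^ 2 + y ^ 2, by nlinarith⟩
      have : 2 ∣ Nat.gcd a (Nat.gcd b c) :=
        Nat.dvd_gcd ⟨x, by omega⟩ (Nat.dvd_gcd ⟨y, by omega⟩ h2c)
      omega
    · exfalso
      obtain ⟨t, ht'⟩ := heven.mp ⟨x, hx⟩
      omega
    · exfalso
      obtain ⟨t, ht'⟩ := heven.mpr ⟨y, hy⟩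
      omega
    · omega
  -- gcd a b = 1
  have hab : Nat.Coprime a b := by
    by_contra hcon
    obtain ⟨p, hp, hpa, hpb⟩ := Nat.Prime.not_coprime_iff_dvd.mp hcon
    have hp2 : p ≠ 2 := by
      rintro rfl
      obtain ⟨x, hx⟩ := hpa; omega
    have hpc : p ∣ c := by
      have h1 : p ∣ 2 * c ^ 2 := by
        rw [← h]
        exact Nat.dvd_add (Dvd.dvd.pow hpa (by norm_num)) (Dvd.dvd.pow hpb (by norm_num))
      have hcop2 : Nat.Coprime p 2 := (Nat.coprime_primes hp Nat.prime_two).mpr hp2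
      exact hp.dvd_of_dvd_pow (hcop2.dvd_of_dvd_mul_left h1)
    have : p ∣ Nat.gcd a (Nat.gcd b c) := Nat.dvd_gcd hpa (Nat.dvd_gcd hpb hpc)
    rw [hprim] at this
    exact hp.one_lt.ne' (Nat.dvd_one.mp this)
  have hZ : (a : ℤ) ^ 2 + (b : ℤ) ^ 2 = 2 * (c : ℤ) ^ 2 := by exact_mod_cast h
  have hApos : (0 : ℤ) < (a : ℤ) := by exact_mod_cast ha
  have hBpos : (0 : ℤ) < (b : ℤ) := by exact_mod_cast hb
  have hCpos : (0 : ℤ) < (c : ℤ) := by exact_mod_cast hc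
  obtain ⟨u, hu⟩ : ∃ u : ℤ, (a : ℤ) + (b : ℤ) = 2 * u := ⟨((a : ℤ) + b) / 2, by omega⟩
  obtain ⟨v, hv⟩ : ∃ v : ℤ, (a : ℤ) - (b : ℤ) = 2 * v := ⟨((a : ℤ) - b) / 2, by omega⟩
  have hAuv : (a : ℤ) = u + v := by omega
  have hBuv : (b : ℤ) = u - v := by omega
  have hABcop : IsCoprime (a : ℤ) (b : ℤ) := by
    rw [Int.isCoprime_iff_gcd_eq_one, Int.gcd_natCast_natCast]
    exact hab
  have huv : IsCoprime u v := by
    obtain ⟨x, y, hxy⟩ := hABcop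
    rw [hAuv, hBuv] at hxy
    exact ⟨x + y, x - y, by linear_combination hxy⟩
  have ht : PythagoreanTriple u v (c : ℤ) := by
    show u * u + v * v = (c : ℤ) * (c : ℤ)
    nlinarith [hZ, hAuv, hBuv]
  obtain ⟨m, n, h1, h2, h3, h4⟩ :=
    PythagoreanTriple.coprime_classification.mp
      ⟨ht, Int.isCoprime_iff_gcd_eq_one.mp huv⟩
  have hCval : (c : ℤ) = m ^ 2 + n ^ 2 := by
    rcases h2 with h2 | h2
    · exact h2
    · exfalso; nlinarith [sq_nonneg m, sq_nonneg n]
  refine ⟨n, m, ?_, ?_, ?_, ?_, ?_⟩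
  · exact (Int.isCoprime_iff_gcd_eq_one.mpr h3).symm
  · omega
  · have hval : n ^ 2 - 2 * n * m - m ^ 2 = -(a : ℤ) := by
      rcases h1 with ⟨h5, h6⟩ | ⟨h5, h6⟩ <;> linear_combination hAuv + h5 + h6
    rw [hval, abs_neg, abs_of_nonneg hApos.le]
  · rcases h1 with ⟨h5, h6⟩ | ⟨h5, h6⟩
    · have hval : n ^ 2 + 2 * n * m - m ^ 2 = -(b : ℤ) := by
        linear_combination hBuv + h5 - h6
      rw [hval, abs_neg, abs_of_nonneg hBpos.le]
    · have hval : n ^ 2 + 2 * n * m - m ^ 2 = (b : ℤ) := by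
        linear_combination -hBuv - h5 + h6
      rw [hval, abs_of_nonneg hBpos.le]
  · rw [hCval]; ring
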